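/- For all integers n ≥ 0 and k ≥ 0, the difference ΔP_{n,k} := P(max(1, M_{n+1}) − S_{n+1} ≤ k) − P(max(1, M_n) − S_n ≤ k) satisfies ΔP_{n,k} = p·P(M_n = 0, S_n = −k) − q·P(M_n ≤ 1, S_n = 1−k). -/

import Mathlib

open Finset

/-- Probability weight of a single path of length `N`. -/
noncomputable def pathProb (p : ℝ) (N : ℕ) (x : Fin N → Bool) : ℝ :=
  p ^ (Finset.univ.filter (fun i => x i = true)).card *
    (1 - p) ^ (N - (Finset.univ.filter (fun i => x i = true)).card)

open Classical in
/-- Probability of an event `E` for the `N`-step Bernoulli walk. -/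
noncomputable def walkProb (p : ℝ) (N : ℕ) (E : Set (Fin N → Bool)) : ℝ :=
  ∑ x : Fin N → Bool, if x ∈ E then pathProb p N x else 0

/-- Partial sum `S_j` of the walk given by the path `x`. -/
def walkS (N : ℕ) (x : Fin N → Bool) (j : ℕ) : ℤ :=
  ∑ i ∈ Finset.univ.filter (fun i : Fin N => (i : ℕ) < j), (if x i then (1 : ℤ) else -1)

/-- Running maximum `M_N = max_{0 ≤ j ≤ N} S_j`. -/
def walkM (N : ℕ) (x : Fin N → Bool) : ℤ :=
  (Finset.range (N + 1)).sup' Finset.nonempty_range_add_one (fun j => walkS N x j)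

/-- `U_n(p) = P(M_n ≤ 1)`. -/
noncomputable def U (n : ℕ) (p : ℝ) : ℝ :=
  walkProb p n {x | walkM n x ≤ 1}

/-! ### Auxiliary lemmas -/

lemma pathProb_eq_prod (p : ℝ) (N : ℕ) (x : Fin N → Bool) :
    pathProb p N x = ∏ i : Fin N, (if x i then p else (1 - p)) := by
  classical
  rw [Finset.prod_ite, Finset.prod_const, Finset.prod_const, pathProb]
  congr 2
  have := Finset.card_filter_add_card_filter_not
    (s := (Finset.univ : Finset (Fin N))) (p := fun i => x i = true)
  simp only [Finset.card_univ, Fintype.card_fin] at this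
  omega

lemma pathProb_cons (p : ℝ) (n : ℕ) (b : Bool) (y : Fin n → Bool) :
    pathProb p (n + 1) (Fin.cons b y) = (if b then p else (1 - p)) * pathProb p n y := by
  rw [pathProb_eq_prod, pathProb_eq_prod, Fin.prod_univ_succ]
  simp

lemma walkS_eq (N : ℕ) (x : Fin N → Bool) (j : ℕ) :
    walkS N x j = ∑ i : Fin N, if (i : ℕ) < j then (if x i then (1 : ℤ) else -1) else 0 := by
  rw [walkS, Finset.sum_filter]

lemma walkS_zero (N : ℕ) (x : Fin N → Bool) : walkS N x 0 = 0 := by simp [walkS]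

lemma walkS_cons_succ (n : ℕ) (b : Bool) (y : Fin n → Bool) (j : ℕ) :
    walkS (n + 1) (Fin.cons b y) (j + 1) = (if b then 1 else -1) + walkS n y j := by
  rw [walkS_eq, walkS_eq, Fin.sum_univ_succ]
  simp [Nat.succ_lt_succ_iff]

lemma walkM_cons (n : ℕ) (b : Bool) (y : Fin n → Bool) :
    walkM (n + 1) (Fin.cons b y) = max 0 ((if b then 1 else -1) + walkM n y) := by
  apply le_antisymm
  · apply Finset.sup'_le
    intro j hj
    match j with
    | 0 => simp [walkS_zero]
    | (i+1) =>
      rw [walkS_cons_succ]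
      have hi : i ∈ Finset.range (n + 1) := by
        simp only [Finset.mem_range] at hj ⊢; omega
      have h2 : walkS n y i ≤ walkM n y := Finset.le_sup' (fun j => walkS n y j) hi
      exact le_max_of_le_right (add_le_add_right h2 _)
  · apply max_le
    · have := Finset.le_sup' (fun j => walkS (n+1) (Fin.cons b y) j)
        (Finset.mem_range.2 (Nat.succ_pos (n+1)))
      rwa [walkS_zero] at this
    · obtain ⟨j, hj, hje⟩ := Finset.exists_mem_eq_sup' (Finset.nonempty_range_add_one)
        (fun j => walkS n y j)
      rw [walkM, hje]
      have hj1 : j + 1 ∈ Finset.range (n + 1 + 1) := by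
        simp only [Finset.mem_range] at hj ⊢; omega
      have := Finset.le_sup' (fun j => walkS (n+1) (Fin.cons b y) j) hj1
      rw [walkS_cons_succ] at this
      exact this

lemma walkM_nonneg (N : ℕ) (x : Fin N → Bool) : 0 ≤ walkM N x := by
  have := Finset.le_sup' (fun j => walkS N x j) (Finset.mem_range.2 (Nat.succ_pos N))
  rwa [walkS_zero] at this

lemma walkS_le_walkM (N : ℕ) (x : Fin N → Bool) : walkS N x N ≤ walkM N x :=
  Finset.le_sup' (fun j => walkS N x j) (Finset.mem_range.2 (Nat.lt_succ_self N))

lemma walkProb_congr (p : ℝ) (n : ℕ) {A B : Set (Fin n → Bool)}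
    (h : ∀ y, y ∈ A ↔ y ∈ B) : walkProb p n A = walkProb p n B := by
  have : A = B := Set.ext h
  rw [this]

lemma walkProb_split (p : ℝ) (n : ℕ) (P Q : (Fin n → Bool) → Prop) :
    walkProb p n {y | P y} =
      walkProb p n {y | P y ∧ Q y} + walkProb p n {y | P y ∧ ¬ Q y} := by
  classical
  rw [walkProb, walkProb, walkProb, ← Finset.sum_add_distrib]
  apply Finset.sum_congr rfl
  intro y _
  by_cases hP : P y <;> by_cases hQ : Q y <;> simp [hP, hQ, Set.mem_setOf_eq]

lemma walkProb_cons_decomp (p : ℝ) (n : ℕ) (E : Set (Fin (n + 1) → Bool)) :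
    walkProb p (n + 1) E =
      p * walkProb p n {y | Fin.cons true y ∈ E} +
      (1 - p) * walkProb p n {y | Fin.cons false y ∈ E} := by
  classical
  rw [walkProb]
  rw [← Equiv.sum_comp (Fin.consEquiv (fun _ : Fin (n+1) => Bool))
    (fun x => if x ∈ E then pathProb p (n+1) x else 0)]
  rw [Fintype.sum_prod_type, Fintype.sum_bool]
  rw [walkProb, walkProb, Finset.mul_sum, Finset.mul_sum]
  congr 1
  · apply Finset.sum_congr rfl
    intro y _
    have he : ((Fin.consEquiv fun _ : Fin (n+1) => Bool) (true, y)) = Fin.cons true y := rfl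
    rw [he]
    by_cases h : Fin.cons true y ∈ E
    · rw [if_pos h, if_pos (show y ∈ {y | Fin.cons true y ∈ E} from h), pathProb_cons]; simp
    · rw [if_neg h, if_neg (show y ∉ {y | Fin.cons true y ∈ E} from h), mul_zero]
  · apply Finset.sum_congr rfl
    intro y _
    have he : ((Fin.consEquiv fun _ : Fin (n+1) => Bool) (false, y)) = Fin.cons false y := rfl
    rw [he]
    by_cases h : Fin.cons false y ∈ E
    · rw [if_pos h, if_pos (show y ∈ {y | Fin.cons false y ∈ E} from h), pathProb_cons]; simp
    · rw [if_neg h, if_neg (show y ∉ {y | Fin.cons false y ∈ E} from h), mul_zero]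

/-- `ΔP_{n,k} = p·P(M_n = 0, S_n = −k) − q·P(M_n ≤ 1, S_n = 1−k)`. -/
theorem deltaP_formula (p : ℝ) (hp : p ∈ Set.Ioo (0 : ℝ) 1) (n k : ℕ) :
    walkProb p (n + 1) {x | max 1 (walkM (n + 1) x) - walkS (n + 1) x (n + 1) ≤ (k : ℤ)} -
      walkProb p n {x | max 1 (walkM n x) - walkS n x n ≤ (k : ℤ)} =
    p * walkProb p n {x | walkM n x = 0 ∧ walkS n x n = -(k : ℤ)} -
      (1 - p) * walkProb p n {x | walkM n x ≤ 1 ∧ walkS n x n = 1 - (k : ℤ)} := by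
  classical
  rw [walkProb_cons_decomp]
  have ht : walkProb p n {y | Fin.cons true y ∈
      {x | max 1 (walkM (n + 1) x) - walkS (n + 1) x (n + 1) ≤ (k : ℤ)}} =
      walkProb p n {y | walkM n y - walkS n y n ≤ (k : ℤ)} := by
    apply walkProb_congr
    intro y
    simp only [Set.mem_setOf_eq, walkM_cons, walkS_cons_succ, if_true,
      sub_le_iff_le_add, max_le_iff]
    have h0 : (0 : ℤ) ≤ walkM n y := walkM_nonneg n y
    omega
  have hf : walkProb p n {y | Fin.cons false y ∈
      {x | max 1 (walkM (n + 1) x) - walkS (n + 1) x (n + 1) ≤ (k : ℤ)}} =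
      walkProb p n {y | walkM n y - walkS n y n ≤ (k : ℤ) ∧ 2 - (k : ℤ) ≤ walkS n y n} := by
    apply walkProb_congr
    intro y
    simp only [Set.mem_setOf_eq, walkM_cons, walkS_cons_succ, if_false, Bool.false_eq_true,
      sub_le_iff_le_add, max_le_iff]
    have h0 : (0 : ℤ) ≤ walkM n y := walkM_nonneg n y
    omega
  rw [ht, hf]
  have hn : walkProb p n {x | max 1 (walkM n x) - walkS n x n ≤ (k : ℤ)} =
      walkProb p n {y | walkM n y - walkS n y n ≤ (k : ℤ) ∧ 1 - (k : ℤ) ≤ walkS n y n} := by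
    apply walkProb_congr
    intro y
    simp only [Set.mem_setOf_eq, sub_le_iff_le_add, max_le_iff]
    omega
  rw [hn]
  have h1 : walkProb p n {y | walkM n y - walkS n y n ≤ (k : ℤ)} =
      walkProb p n {y | walkM n y - walkS n y n ≤ (k : ℤ) ∧ 1 - (k : ℤ) ≤ walkS n y n} +
      walkProb p n {y | walkM n y = 0 ∧ walkS n y n = -(k : ℤ)} := by
    rw [walkProb_split p n (fun y => walkM n y - walkS n y n ≤ (k : ℤ))
      (fun y => 1 - (k : ℤ) ≤ walkS n y n)]
    congr 1
    apply walkProb_congr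
    intro y
    have h0 : (0 : ℤ) ≤ walkM n y := walkM_nonneg n y
    have hk : (0 : ℤ) ≤ (k : ℤ) := Int.natCast_nonneg k
    simp only [Set.mem_setOf_eq]
    omega
  have h2 : walkProb p n
      {y | walkM n y - walkS n y n ≤ (k : ℤ) ∧ 1 - (k : ℤ) ≤ walkS n y n} =
      walkProb p n {y | walkM n y - walkS n y n ≤ (k : ℤ) ∧ 2 - (k : ℤ) ≤ walkS n y n} +
      walkProb p n {y | walkM n y ≤ 1 ∧ walkS n y n = 1 - (k : ℤ)} := by
    rw [walkProb_split p n
      (fun y => walkM n y - walkS n y n ≤ (k : ℤ) ∧ 1 - (k : ℤ) ≤ walkS n y n)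
      (fun y => 2 - (k : ℤ) ≤ walkS n y n)]
    congr 1
    · apply walkProb_congr; intro y
      simp only [Set.mem_setOf_eq]
      omega
    · apply walkProb_congr; intro y
      simp only [Set.mem_setOf_eq]
      omega
  rw [h1, h2]
  ring
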